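/- Let X be a compact Hausdorff space, x₀ ∈ X, and F : ([0,1],×) → (C_{x₀}(X),∘) a continuous injective monoid homomorphism (with the compact-open topology on C_{x₀}(X)) such that F(0) is the constant map at x₀, F(1) = Id_X, and F(α) is injective for all α ∈ (0,1]. Let C = X − ⋃_{α∈[0,1)} F(α)(X). Then {F(α)(C)}_{α∈[0,1]} is a partition of X into nonempty pairwise disjoint sets covering X. -/

import Mathlib

open Set Topology

def coneComplement {X : Type*} [TopologicalSpace X] (F : ℝ → C(X, X)) : Set X :=
  Set.univ \ ⋃ α ∈ Set.Ico (0 : ℝ) 1, Set.range (F α)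

lemma mem_coneComplement {X : Type*} [TopologicalSpace X] {F : ℝ → C(X, X)} {c : X} :
    c ∈ coneComplement F ↔ ∀ β ∈ Set.Ico (0:ℝ) 1, ∀ d, F β d ≠ c := by
  simp [coneComplement, Set.mem_iUnion, Set.range, eq_comm]

lemma exists_min {X : Type*} [TopologicalSpace X] [CompactSpace X] [T2Space X]
    (F : ℝ → C(X, X)) (hcont : ContinuousOn F (Set.Icc (0:ℝ) 1))
    (h1 : ∀ x : X, F 1 x = x) (x : X) :
    ∃ m ∈ Set.Icc (0:ℝ) 1, (∃ y, F m y = x) ∧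
      ∀ β ∈ Set.Icc (0:ℝ) 1, (∀ z, F β z ≠ x) ∨ m ≤ β := by
  set S : Set (ℝ × X) := {p | p.1 ∈ Set.Icc (0:ℝ) 1 ∧ F p.1 p.2 = x} with hS
  have hg : ContinuousOn (fun p : ℝ × X => F p.1 p.2)
      (Set.Icc (0:ℝ) 1 ×ˢ (Set.univ : Set X)) := by
    have hpair : ContinuousOn (fun p : ℝ × X => (F p.1, p.2))
        (Set.Icc (0:ℝ) 1 ×ˢ (Set.univ : Set X)) := by
      apply ContinuousOn.prodMk
      · exact hcont.comp continuous_fst.continuousOn (fun p hp => hp.1)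
      · exact continuous_snd.continuousOn
    exact ContinuousEval.continuous_eval.comp_continuousOn hpair
  have hSclosed : IsClosed S := by
    have := hg.preimage_isClosed_of_isClosed
      ((isClosed_Icc).prod isClosed_univ) (isClosed_singleton (x := x))
    convert this using 1
    ext p
    simp [hS, Set.mem_prod]
  have hScompact : IsCompact S :=
    ((isCompact_Icc).prod isCompact_univ).of_isClosed_subset hSclosed
      (fun p hp => ⟨hp.1, Set.mem_univ _⟩)
  have hne : ((fun p : ℝ × X => p.1) '' S).Nonempty :=
    ⟨1, ⟨(1, x), ⟨⟨zero_le_one, le_refl 1⟩, h1 x⟩, rfl⟩⟩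
  obtain ⟨m, hmA, hmin⟩ :=
    (hScompact.image continuous_fst).exists_isLeast hne
  obtain ⟨⟨m', y⟩, ⟨hm1, hm2⟩, rfl⟩ := hmA
  refine ⟨m', hm1, ⟨y, hm2⟩, fun β hβ => ?_⟩
  by_cases h : ∀ z, F β z ≠ x
  · exact Or.inl h
  · push_neg at h
    obtain ⟨z, hz⟩ := h
    exact Or.inr (hmin ⟨(β, z), ⟨hβ, hz⟩, rfl⟩)

theorem stmt_11 {X : Type*} [TopologicalSpace X] [CompactSpace X] [T2Space X] (x₀ : X)
    (F : ℝ → C(X, X))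
    (hcont : ContinuousOn F (Set.Icc (0 : ℝ) 1))
    (hinjF : Set.InjOn F (Set.Icc (0 : ℝ) 1))
    (hmul : ∀ α ∈ Set.Icc (0 : ℝ) 1, ∀ β ∈ Set.Icc (0 : ℝ) 1,
      F (α * β) = (F α).comp (F β))
    (hfix : ∀ α ∈ Set.Icc (0 : ℝ) 1, F α x₀ = x₀)
    (h0 : ∀ x : X, F 0 x = x₀)
    (h1 : ∀ x : X, F 1 x = x)
    (hinj : ∀ α ∈ Set.Ioc (0 : ℝ) 1, Function.Injective (F α)) :
    (∀ α ∈ Set.Icc (0 : ℝ) 1, (F α '' coneComplement F).Nonempty) ∧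
    (∀ α ∈ Set.Icc (0 : ℝ) 1, ∀ β ∈ Set.Icc (0 : ℝ) 1, α ≠ β →
      Disjoint (F α '' coneComplement F) (F β '' coneComplement F)) ∧
    (⋃ α ∈ Set.Icc (0 : ℝ) 1, F α '' coneComplement F) = Set.univ := by
  -- for every x ≠ x₀, find m ∈ (0,1] and c ∈ C with F m c = x
  have key : ∀ x : X, x ≠ x₀ → ∃ m ∈ Set.Icc (0:ℝ) 1, 0 < m ∧
      ∃ c ∈ coneComplement F, F m c = x := by
    intro x hx
    obtain ⟨m, hm, ⟨c, hc⟩, hmin⟩ := exists_min F hcont h1 x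
    have hm0 : 0 < m := by
      rcases lt_or_eq_of_le hm.1 with h | h
      · exact h
      · exfalso; apply hx; rw [← hc, ← h, h0]
    refine ⟨m, hm, hm0, c, ?_, hc⟩
    rw [mem_coneComplement]
    intro β hβ d hd
    have hmb : m * β ∈ Set.Icc (0:ℝ) 1 :=
      ⟨mul_nonneg hm.1 hβ.1, le_trans (mul_le_one₀ hm.2 hβ.1 hβ.2.le) le_rfl⟩
    have : F (m * β) d = x := by
      rw [hmul m hm β ⟨hβ.1, hβ.2.le⟩]
      simp [ContinuousMap.comp_apply, hd, hc]
    rcases hmin (m * β) hmb with h | h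
    · exact h d this
    · have : m * β < m := by
        calc m * β < m * 1 := by exact mul_lt_mul_of_pos_left hβ.2 hm0
        _ = m := mul_one m
      linarith
  -- C is nonempty
  have hCne : (coneComplement F).Nonempty := by
    have hne : ∃ x : X, x ≠ x₀ := by
      by_contra h
      push_neg at h
      have : F 0 = F 1 := by
        ext z
        rw [h0, h1, h z]
      have := hinjF ⟨le_refl 0, zero_le_one⟩ ⟨zero_le_one, le_refl 1⟩ this
      norm_num at this
    obtain ⟨x, hx⟩ := hne
    obtain ⟨m, _, _, c, hcC, _⟩ := key x hx
    exact ⟨c, hcC⟩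
  -- x₀ is not in C
  have hx₀ : x₀ ∉ coneComplement F := by
    rw [mem_coneComplement]
    push_neg
    exact ⟨0, ⟨le_refl 0, zero_lt_one⟩, x₀, h0 x₀⟩
  -- asymmetric disjointness
  have hdisj : ∀ α ∈ Set.Icc (0:ℝ) 1, ∀ β ∈ Set.Icc (0:ℝ) 1, α < β →
      Disjoint (F α '' coneComplement F) (F β '' coneComplement F) := by
    intro α hα β hβ hab
    rw [Set.disjoint_left]
    rintro y ⟨c, hc, rfl⟩ ⟨c', hc', heq⟩
    have hβ0 : 0 < β := lt_of_le_of_lt hα.1 hab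
    have hβIoc : β ∈ Set.Ioc (0:ℝ) 1 := ⟨hβ0, hβ.2⟩
    rcases lt_or_eq_of_le hα.1 with hα0 | hα0
    · -- 0 < α : write α = β * (α/β)
      set γ := α / β with hγ
      have hγmem : γ ∈ Set.Ico (0:ℝ) 1 :=
        ⟨div_nonneg hα.1 hβ0.le, (div_lt_one hβ0).2 hab⟩
      have hαβγ : α = β * γ := by rw [hγ, mul_div_assoc']; exact (mul_div_cancel_left₀ α hβ0.ne').symm
      have : F β (F γ c) = F β c' := by
        have hco := hmul β hβ γ ⟨hγmem.1, hγmem.2.le⟩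
        rw [← hαβγ] at hco
        calc F β (F γ c) = F α c := by rw [hco]; rfl
        _ = F β c' := heq.symm
      have hcc' : F γ c = c' := hinj β hβIoc this
      rw [mem_coneComplement] at hc'
      exact hc' γ hγmem c hcc'
    · -- α = 0 : then F β c' = x₀, so c' = x₀ ∉ C
      have hx : F β c' = x₀ := by rw [heq, ← hα0, h0]
      have : F β c' = F β x₀ := by rw [hx, hfix β hβ]
      have hc'x₀ : c' = x₀ := hinj β hβIoc this
      rw [hc'x₀] at hc'
      exact hx₀ hc'
  refine ⟨?_, ?_, ?_⟩
  · intro α hα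
    obtain ⟨c, hc⟩ := hCne
    exact ⟨F α c, c, hc, rfl⟩
  · intro α hα β hβ hne
    rcases lt_or_gt_of_ne hne with h | h
    · exact hdisj α hα β hβ h
    · exact (hdisj β hβ α hα h).symm
  · ext x
    simp only [Set.mem_iUnion, Set.mem_univ, iff_true]
    by_cases hx : x = x₀
    · obtain ⟨c, hc⟩ := hCne
      exact ⟨0, ⟨le_refl 0, zero_le_one⟩, c, hc, by rw [h0, hx]⟩
    · obtain ⟨m, hm, _, c, hcC, hmc⟩ := key x hx
      exact ⟨m, hm, c, hcC, hmc⟩
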